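/- Let J(x) = 256(x²-x+1)³/(x²(x-1)²). If π⁴ + ξ⁴ = 1 with π, ξ nonzero and π⁴ ≠ 1, then J((1-π²)²/(1+π²)²) = 16(ξ⁸ - 16ξ⁴ + 16)³/(ξ¹⁶(1-ξ⁴)), provided 1+π² ≠ 0. -/

import Mathlib

/-- `J(x) = 256(x² - x + 1)³ / (x²(x-1)²)`. -/
noncomputable def Jfun (x : ℂ) : ℂ := 256 * (x ^ 2 - x + 1) ^ 3 / (x ^ 2 * (x - 1) ^ 2)

lemma Jfun_div (a b : ℂ) (ha : a ≠ 0) (hb : b ≠ 0) (hab : a - b ≠ 0) :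
    Jfun (a / b) = 256 * (a ^ 2 - a * b + b ^ 2) ^ 3 / (a ^ 2 * b ^ 2 * (a - b) ^ 2) := by
  unfold Jfun
  rw [div_eq_div_iff]
  · field_simp
  · apply mul_ne_zero
    · exact pow_ne_zero 2 (div_ne_zero ha hb)
    · apply pow_ne_zero
      rw [div_sub_one hb]
      exact div_ne_zero hab hb
  · exact mul_ne_zero (mul_ne_zero (pow_ne_zero 2 ha) (pow_ne_zero 2 hb)) (pow_ne_zero 2 hab)

theorem stmt_2 (π ξ : ℂ) (hπ : π ≠ 0) (hξ : ξ ≠ 0) (hferm : π ^ 4 + ξ ^ 4 = 1)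
    (hπ1 : π ^ 4 ≠ 1) (hden : 1 + π ^ 2 ≠ 0) :
    Jfun ((1 - π ^ 2) ^ 2 / (1 + π ^ 2) ^ 2) =
      16 * (ξ ^ 8 - 16 * ξ ^ 4 + 16) ^ 3 / (ξ ^ 16 * (1 - ξ ^ 4)) := by
  have hξ4 : ξ ^ 4 = 1 - π ^ 4 := by linear_combination hferm
  have hπ2 : 1 - π ^ 2 ≠ 0 := by
    intro h
    apply hπ1
    have h2 : π ^ 2 = 1 := by linear_combination -h
    calc π ^ 4 = (π ^ 2) ^ 2 := by ring
    _ = 1 := by rw [h2]; ring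
  have hπ4 : 1 - π ^ 4 ≠ 0 := by
    intro h; exact hπ1 (by linear_combination -h)
  have h1ξ : 1 - ξ ^ 4 = π ^ 4 := by linear_combination -hferm
  rw [show ξ ^ 16 = (ξ ^ 4) ^ 4 by ring, show ξ ^ 8 = (ξ ^ 4) ^ 2 by ring, h1ξ, hξ4]
  rw [Jfun_div _ _ (pow_ne_zero 2 hπ2) (pow_ne_zero 2 hden)
      (by intro h; exact hπ (by
        have : π ^ 2 = 0 := by linear_combination -h / 4
        exact pow_eq_zero_iff (n := 2) (by norm_num) |>.mp this))]
  have hd : (1 - π ^ 2) ^ 2 - (1 + π ^ 2) ^ 2 ≠ 0 := by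
    intro h; exact hπ (by
      have : π ^ 2 = 0 := by linear_combination -h / 4
      exact pow_eq_zero_iff (n := 2) (by norm_num) |>.mp this)
  rw [div_eq_div_iff]
  · ring
  · exact mul_ne_zero (mul_ne_zero (pow_ne_zero 2 (pow_ne_zero 2 hπ2))
      (pow_ne_zero 2 (pow_ne_zero 2 hden))) (pow_ne_zero 2 hd)
  · exact mul_ne_zero (pow_ne_zero 4 hπ4) (pow_ne_zero 4 hπ)
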